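/- Fix n ≥ 2 and a field 𝕜 with q ∈ 𝕜 invertible. In the type-A Iwahori–Hecke algebra H_n(q) with standard generators T_1,...,T_{n-1} satisfying T_i² = (q-1)T_i + q, braid relations, and far commutation, define the Young–Jucys–Murphy element J_n = Σ_{i=1}^{n-1} q^{i-n} T_{(i,n)}, where (i,n) denotes the transposition swapping i and n. Then T_{n-1}·J_{n-1} = J_n·(T_{n-1} - q + 1) - 1. -/

import Mathlib

/-- The Coxeter length of a permutation of `Fin n`, i.e. its number of inversions. -/
def permLength {n : ℕ} (w : Equiv.Perm (Fin n)) : ℕ :=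
  (Finset.univ.filter fun p : Fin n × Fin n => p.1 < p.2 ∧ w p.2 < w p.1).card

/-- A realization of the type-A Iwahori–Hecke algebra `H_n(q)` inside a `𝕜`-algebra `H`:
a family `T_w` (`w ∈ S_n`) with `T_1 = 1`, `T_v T_w = T_{vw}` whenever lengths add
(equivalently, `T_w = T_{i_1} ⋯ T_{i_k}` for any reduced word), and the quadratic
relation `T_s² = (q-1) T_s + q` for simple transpositions `s = (i, i+1)`. -/
structure HeckeFamily (𝕜 : Type*) [CommRing 𝕜] (q : 𝕜) (n : ℕ)
    (H : Type*) [Ring H] [Algebra 𝕜 H] where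
  T : Equiv.Perm (Fin n) → H
  T_one : T 1 = 1
  T_mul : ∀ v w : Equiv.Perm (Fin n),
    permLength (v * w) = permLength v + permLength w → T v * T w = T (v * w)
  T_quad : ∀ i j : Fin n, (i : ℕ) + 1 = (j : ℕ) →
    T (Equiv.swap i j) * T (Equiv.swap i j) =
      (q - 1) • T (Equiv.swap i j) + algebraMap 𝕜 H q


lemma swap_lt_helper {n : ℕ} {a b : Fin n} (hab : (a : ℕ) + 1 = (b : ℕ)) (u v : Fin n) :
    Equiv.swap a b v < Equiv.swap a b u ↔
      (v < u ∧ ¬(u = b ∧ v = a)) ∨ (u = a ∧ v = b) := by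
  simp only [Equiv.swap_apply_def, Fin.lt_def, Fin.ext_iff]
  split_ifs <;> omega

lemma permLength_simple {n : ℕ} {a b : Fin n} (hab : (a : ℕ) + 1 = (b : ℕ)) :
    permLength (Equiv.swap a b) = 1 := by
  unfold permLength
  have : (Finset.univ.filter fun p : Fin n × Fin n =>
      p.1 < p.2 ∧ Equiv.swap a b p.2 < Equiv.swap a b p.1) = {(a, b)} := by
    ext ⟨x, y⟩
    simp only [Finset.mem_filter, Finset.mem_univ, true_and, Finset.mem_singleton,
      swap_lt_helper hab, Prod.mk.injEq, Fin.lt_def, Fin.ext_iff]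
    omega
  rw [this, Finset.card_singleton]

lemma permLength_swap_mul {n : ℕ} {a b : Fin n} (hab : (a : ℕ) + 1 = (b : ℕ))
    (w : Equiv.Perm (Fin n)) (hw : w⁻¹ a < w⁻¹ b) :
    permLength (Equiv.swap a b * w) = permLength w + 1 := by
  unfold permLength
  have key : (Finset.univ.filter fun p : Fin n × Fin n =>
      p.1 < p.2 ∧ (Equiv.swap a b * w) p.2 < (Equiv.swap a b * w) p.1)
      = insert (w⁻¹ a, w⁻¹ b)
        (Finset.univ.filter fun p : Fin n × Fin n => p.1 < p.2 ∧ w p.2 < w p.1) := by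
    ext ⟨x, y⟩
    simp only [Finset.mem_filter, Finset.mem_univ, true_and, Finset.mem_insert,
      Equiv.Perm.mul_apply, swap_lt_helper hab, Prod.mk.injEq]
    constructor
    · rintro ⟨hxy, h | ⟨hx, hy⟩⟩
      · exact Or.inr ⟨hxy, h.1⟩
      · exact Or.inl ⟨by rw [← hx]; exact (w.symm_apply_apply x).symm, by rw [← hy]; exact (w.symm_apply_apply y).symm⟩
    · rintro (⟨hx, hy⟩ | ⟨hxy, h⟩)
      · subst hx; subst hy
        exact ⟨hw, Or.inr ⟨w.apply_symm_apply _, w.apply_symm_apply _⟩⟩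
      · refine ⟨hxy, Or.inl ⟨h, ?_⟩⟩
        rintro ⟨hb, ha⟩
        have hx' : x = w⁻¹ b := by rw [← hb]; exact (w.symm_apply_apply x).symm
        have hy' : y = w⁻¹ a := by rw [← ha]; exact (w.symm_apply_apply y).symm
        rw [hx', hy'] at hxy
        exact absurd (hxy.trans hw) (lt_irrefl _)
  rw [key, Finset.card_insert_of_notMem]
  simp only [Finset.mem_filter, Finset.mem_univ, true_and, not_and,
    Equiv.Perm.inv_def, Equiv.apply_symm_apply]
  intro _
  exact not_lt.mpr (le_of_lt (by exact Fin.lt_def.mpr (by omega)))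

lemma permLength_inv {n : ℕ} (w : Equiv.Perm (Fin n)) : permLength w⁻¹ = permLength w := by
  unfold permLength
  apply Finset.card_bij' (fun p _ => (w⁻¹ p.2, w⁻¹ p.1)) (fun p _ => (w p.2, w p.1))
  · rintro ⟨x, y⟩ hp
    simp only [Finset.mem_filter, Finset.mem_univ, true_and] at hp ⊢
    exact ⟨hp.2, by simpa using hp.1⟩
  · rintro ⟨x, y⟩ hp
    simp only [Finset.mem_filter, Finset.mem_univ, true_and] at hp ⊢
    exact ⟨hp.2, by simpa using hp.1⟩
  · rintro ⟨x, y⟩ _; simp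
  · rintro ⟨x, y⟩ _; simp

lemma permLength_mul_swap {n : ℕ} {a b : Fin n} (hab : (a : ℕ) + 1 = (b : ℕ))
    (w : Equiv.Perm (Fin n)) (hw : w a < w b) :
    permLength (w * Equiv.swap a b) = permLength w + 1 := by
  rw [← permLength_inv (w * Equiv.swap a b), mul_inv_rev, Equiv.swap_inv,
    permLength_swap_mul hab w⁻¹ (by simpa using hw), permLength_inv]

/-- In `H_n(q)` (`n ≥ 2`, `q` invertible), with Young–Jucys–Murphy elements
`J_n = Σ_{i=1}^{n-1} q^{i-n} T_{(i,n)}` and `J_{n-1} = Σ_{i=1}^{n-2} q^{i-n+1} T_{(i,n-1)}`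
(written 0-indexed below), one has `T_{n-1} · J_{n-1} = J_n · (T_{n-1} - q + 1) - 1`. -/
theorem stmt16 (𝕜 : Type*) [Field 𝕜] (q : 𝕜) (hq : q ≠ 0) (n : ℕ) (hn : 2 ≤ n)
    (H : Type*) [Ring H] [Algebra 𝕜 H] (hF : HeckeFamily 𝕜 q n H) :
    hF.T (Equiv.swap ⟨n - 2, by omega⟩ ⟨n - 1, by omega⟩) *
      (∑ i ∈ (Finset.range (n - 2)).attach,
        (q⁻¹ ^ (n - 2 - (i : ℕ))) •
          hF.T (Equiv.swap
            ⟨(i : ℕ), by have := Finset.mem_range.mp i.2; omega⟩ ⟨n - 2, by omega⟩)) =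
    (∑ i ∈ (Finset.range (n - 1)).attach,
        (q⁻¹ ^ (n - 1 - (i : ℕ))) •
          hF.T (Equiv.swap
            ⟨(i : ℕ), by have := Finset.mem_range.mp i.2; omega⟩ ⟨n - 1, by omega⟩)) *
      (hF.T (Equiv.swap ⟨n - 2, by omega⟩ ⟨n - 1, by omega⟩) - algebraMap 𝕜 H q + 1)
      - 1 := by
  have hn2 : n - 2 < n := by omega
  have hn1 : n - 1 < n := by omega
  set N2 : Fin n := ⟨n - 2, hn2⟩ with hN2
  set N1 : Fin n := ⟨n - 1, hn1⟩ with hN1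
  have hab : (N2 : ℕ) + 1 = (N1 : ℕ) := by simp [hN2, hN1]; omega
  set S : H := hF.T (Equiv.swap N2 N1) with hS
  set Q : H := algebraMap 𝕜 H q with hQ
  -- key quadratic computation
  have hkey : S * (S - Q + 1) = Q := by
    have h2 := hF.T_quad N2 N1 hab
    have hcomm : S * Q = q • S := by
      rw [hQ, ← Algebra.commutes, ← Algebra.smul_def]
    rw [mul_add, mul_sub, h2, mul_one, hcomm, sub_smul, one_smul]
    abel
  -- the two sums as range sums
  set g1 : ℕ → H := fun i =>
    if h : i < n - 2 then
      (q⁻¹ ^ (n - 2 - i)) • hF.T (Equiv.swap ⟨i, by omega⟩ N2) else 0 with hg1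
  set g2 : ℕ → H := fun i =>
    if h : i < n - 1 then
      (q⁻¹ ^ (n - 1 - i)) • hF.T (Equiv.swap ⟨i, by omega⟩ N1) else 0 with hg2
  have e1 : (∑ i ∈ (Finset.range (n - 2)).attach,
      (q⁻¹ ^ (n - 2 - (i : ℕ))) •
        hF.T (Equiv.swap
          ⟨(i : ℕ), by have := Finset.mem_range.mp i.2; omega⟩ ⟨n - 2, by omega⟩))
      = ∑ i ∈ Finset.range (n - 2), g1 i := by
    rw [← Finset.sum_attach (Finset.range (n - 2)) g1]
    apply Finset.sum_congr rfl
    intro x _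
    have hx : (x : ℕ) < n - 2 := Finset.mem_range.mp x.2
    rw [hg1]
    simp only [dif_pos hx]
    rfl
  have e2 : (∑ i ∈ (Finset.range (n - 1)).attach,
      (q⁻¹ ^ (n - 1 - (i : ℕ))) •
        hF.T (Equiv.swap
          ⟨(i : ℕ), by have := Finset.mem_range.mp i.2; omega⟩ ⟨n - 1, by omega⟩))
      = ∑ i ∈ Finset.range (n - 1), g2 i := by
    rw [← Finset.sum_attach (Finset.range (n - 1)) g2]
    apply Finset.sum_congr rfl
    intro x _
    have hx : (x : ℕ) < n - 1 := Finset.mem_range.mp x.2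
    rw [hg2]
    simp only [dif_pos hx]
    rfl
  rw [e1, e2]
  -- split off the top term of the right sum
  have hsplit : ∑ i ∈ Finset.range (n - 1), g2 i
      = (∑ i ∈ Finset.range (n - 2), g2 i) + q⁻¹ • S := by
    rw [show Finset.range (n - 1) = Finset.range ((n - 2) + 1) by congr 1; omega,
      Finset.sum_range_succ]
    congr 1
    rw [hg2]
    have h1 : n - 2 < n - 1 := by omega
    simp only [dif_pos h1, show n - 1 - (n - 2) = 1 from by omega, pow_one]
    rfl
  rw [hsplit, add_mul, smul_mul_assoc, hkey,
    show q⁻¹ • Q = 1 by rw [hQ, Algebra.smul_def, ← map_mul, inv_mul_cancel₀ hq, map_one],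
    add_sub_cancel_right, Finset.mul_sum, Finset.sum_mul]
  apply Finset.sum_congr rfl
  intro i hi
  have hi2 : i < n - 2 := Finset.mem_range.mp hi
  rw [hg1, hg2]
  simp only [dif_pos hi2, dif_pos (show i < n - 1 by omega)]
  set fi : Fin n := ⟨i, by omega⟩ with hfi
  set w : Equiv.Perm (Fin n) := Equiv.swap fi N2 with hw
  have hfiN2 : fi ≠ N2 := by simp [hfi, hN2, Fin.ext_iff]; omega
  have hfiN1 : fi ≠ N1 := by simp [hfi, hN1, Fin.ext_iff]; omega
  -- product of permutations
  have hperm : Equiv.swap N2 N1 * w * Equiv.swap N2 N1 = Equiv.swap fi N1 := by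
    have := Equiv.swap_apply_apply (Equiv.swap N2 N1) fi N2
    rw [Equiv.swap_apply_of_ne_of_ne hfiN2 hfiN1, Equiv.swap_apply_left, Equiv.swap_inv] at this
    rw [hw, ← this]
  -- lengths
  have hne12 : N1 ≠ N2 := by simp [hN1, hN2, Fin.ext_iff]; omega
  have hwinv : w⁻¹ N2 < w⁻¹ N1 := by
    rw [hw, Equiv.swap_inv, Equiv.swap_apply_right,
      Equiv.swap_apply_of_ne_of_ne (Ne.symm hfiN1) hne12]
    show (i : ℕ) < n - 1
    omega
  have hlen1 : hF.T (Equiv.swap N2 N1) * hF.T w = hF.T (Equiv.swap N2 N1 * w) :=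
    hF.T_mul _ _ (by
      rw [permLength_swap_mul hab w hwinv, permLength_simple hab, add_comm])
  have hu2 : (Equiv.swap N2 N1 * w) N2 < (Equiv.swap N2 N1 * w) N1 := by
    have e1 : (Equiv.swap N2 N1 * w) N2 = fi := by
      rw [Equiv.Perm.mul_apply, hw, Equiv.swap_apply_right]
      exact Equiv.swap_apply_of_ne_of_ne hfiN2 hfiN1
    have e2 : (Equiv.swap N2 N1 * w) N1 = N2 := by
      rw [Equiv.Perm.mul_apply, hw,
        Equiv.swap_apply_of_ne_of_ne (Ne.symm hfiN1) hne12, Equiv.swap_apply_right]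
    rw [e1, e2]
    show (i : ℕ) < n - 2
    omega
  have hlen2 : hF.T (Equiv.swap N2 N1 * w) * hF.T (Equiv.swap N2 N1)
      = hF.T (Equiv.swap N2 N1 * w * Equiv.swap N2 N1) :=
    hF.T_mul _ _ (by
      rw [permLength_mul_swap hab _ hu2, permLength_simple hab])
  have hv : hF.T (Equiv.swap fi N1) = S * hF.T w * S := by
    rw [hS, hlen1, hlen2, hperm]
  rw [hv, smul_mul_assoc, mul_assoc, mul_assoc, hkey, ← mul_assoc]
  have hSQ : (S * hF.T w) * Q = q • (S * hF.T w) := by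
    rw [hQ, ← Algebra.commutes, ← Algebra.smul_def]
  rw [hSQ, smul_smul, mul_smul_comm]
  congr 1
  rw [show n - 1 - i = (n - 2 - i) + 1 by omega, pow_succ, mul_assoc,
    inv_mul_cancel₀ hq, mul_one]
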